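/- Define the eight triples of vectors in ℝ³: (η¹, η₁¹, η₂¹) = ((1,0,0), (0,1,0), (0,0,1)); (η², η₁², η₂²) = ((0,0,−1), (0,1,0), (1,0,0)); (η³, η₁³, η₂³) = ((0,1,0), (−1,0,0), (0,0,1)); (η⁴, η₁⁴, η₂⁴) = ((2/3,1/3,−2/3), (1/3,2/3,2/3), (2/3,−2/3,1/3)); (η⁵, η₁⁵, η₂⁵) = ((2/3,2/3,1/3), (−2/3,1/3,2/3), (1/3,−2/3,2/3)); (η⁶, η₁⁶, η₂⁶) = ((2/3,−2/3,−1/3), (2/3,1/3,2/3), (−1/3,−2/3,2/3)); (η⁷, η₁⁷, η₂⁷) = ((2/3,−1/3,2/3), (−1/3,2/3,2/3), (−2/3,−2/3,1/3)); (η⁸, η₁⁸, η₂⁸) = ((1/3,2/3,−2/3), (−2/3,2/3,1/3), (2/3,1/3,2/3)). Then: (a) each of these eight triples is an orthonormal frame of ℝ³; and (b) the eight pairs Wᵢ = (η₁ⁱ ⊗ η₁ⁱ − η₂ⁱ ⊗ η₂ⁱ, η₁ⁱ ⊗ η₂ⁱ − η₂ⁱ ⊗ η₁ⁱ), i = 1,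 …, 8, are linearly independent over ℝ and form a basis of the 8-dimensional real vector space V = Sym₀³ × Skew³. -/

import Mathlib

open scoped BigOperators

/-- Euclidean dot product on `ℝ³` (vectors as `Fin 3 → ℝ`). -/
def dot3 (a b : Fin 3 → ℝ) : ℝ := ∑ i, a i * b i

/-- `(e₀, e₁, e₂)` is an orthonormal frame (orthonormal basis) of `ℝ³`. -/
def IsONFrame (e₀ e₁ e₂ : Fin 3 → ℝ) : Prop :=
  dot3 e₀ e₀ = 1 ∧ dot3 e₁ e₁ = 1 ∧ dot3 e₂ e₂ = 1 ∧
  dot3 e₀ e₁ = 0 ∧ dot3 e₀ e₂ = 0 ∧ dot3 e₁ e₂ = 0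

/-- The eight frame directions `ηⁱ`. -/
noncomputable def eta8 : Fin 8 → Fin 3 → ℝ :=
  ![![1, 0, 0], ![0, 0, -1], ![0, 1, 0],
    ![2/3, 1/3, -2/3], ![2/3, 2/3, 1/3], ![2/3, -2/3, -1/3],
    ![2/3, -1/3, 2/3], ![1/3, 2/3, -2/3]]

/-- The eight first frame vectors `η₁ⁱ`. -/
noncomputable def eta8₁ : Fin 8 → Fin 3 → ℝ :=
  ![![0, 1, 0], ![0, 1, 0], ![-1, 0, 0],
    ![1/3, 2/3, 2/3], ![-2/3, 1/3, 2/3], ![2/3, 1/3, 2/3],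
    ![-1/3, 2/3, 2/3], ![-2/3, 2/3, 1/3]]

/-- The eight second frame vectors `η₂ⁱ`. -/
noncomputable def eta8₂ : Fin 8 → Fin 3 → ℝ :=
  ![![0, 0, 1], ![1, 0, 0], ![0, 0, 1],
    ![2/3, -2/3, 1/3], ![1/3, -2/3, 2/3], ![-1/3, -2/3, 2/3],
    ![-2/3, -2/3, 1/3], ![2/3, 1/3, 2/3]]

/-- `Wᵢ = (η₁ⁱ ⊗ η₁ⁱ − η₂ⁱ ⊗ η₂ⁱ, η₁ⁱ ⊗ η₂ⁱ − η₂ⁱ ⊗ η₁ⁱ) ∈ Sym₀³ × Skew³`. -/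
noncomputable def W8 : Fin 8 → Matrix (Fin 3) (Fin 3) ℝ × Matrix (Fin 3) (Fin 3) ℝ :=
  fun i =>
    (Matrix.vecMulVec (eta8₁ i) (eta8₁ i) - Matrix.vecMulVec (eta8₂ i) (eta8₂ i),
     Matrix.vecMulVec (eta8₁ i) (eta8₂ i) - Matrix.vecMulVec (eta8₂ i) (eta8₁ i))

section aux

lemma E0_0 : eta8 0 = ![1, 0, 0] := rfl
lemma E0_1 : eta8 1 = ![0, 0, -1] := rfl
lemma E0_2 : eta8 2 = ![0, 1, 0] := rfl
lemma E0_3 : eta8 3 = ![2/3, 1/3, -2/3] := rfl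
lemma E0_4 : eta8 4 = ![2/3, 2/3, 1/3] := rfl
lemma E0_5 : eta8 5 = ![2/3, -2/3, -1/3] := rfl
lemma E0_6 : eta8 6 = ![2/3, -1/3, 2/3] := rfl
lemma E0_7 : eta8 7 = ![1/3, 2/3, -2/3] := rfl

lemma E1_0 : eta8₁ 0 = ![0, 1, 0] := rfl
lemma E1_1 : eta8₁ 1 = ![0, 1, 0] := rfl
lemma E1_2 : eta8₁ 2 = ![-1, 0, 0] := rfl
lemma E1_3 : eta8₁ 3 = ![1/3, 2/3, 2/3] := rfl
lemma E1_4 : eta8₁ 4 = ![-2/3, 1/3, 2/3] := rfl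
lemma E1_5 : eta8₁ 5 = ![2/3, 1/3, 2/3] := rfl
lemma E1_6 : eta8₁ 6 = ![-1/3, 2/3, 2/3] := rfl
lemma E1_7 : eta8₁ 7 = ![-2/3, 2/3, 1/3] := rfl

lemma E2_0 : eta8₂ 0 = ![0, 0, 1] := rfl
lemma E2_1 : eta8₂ 1 = ![1, 0, 0] := rfl
lemma E2_2 : eta8₂ 2 = ![0, 0, 1] := rfl
lemma E2_3 : eta8₂ 3 = ![2/3, -2/3, 1/3] := rfl
lemma E2_4 : eta8₂ 4 = ![1/3, -2/3, 2/3] := rfl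
lemma E2_5 : eta8₂ 5 = ![-1/3, -2/3, 2/3] := rfl
lemma E2_6 : eta8₂ 6 = ![-2/3, -2/3, 1/3] := rfl
lemma E2_7 : eta8₂ 7 = ![2/3, 1/3, 2/3] := rfl

/-- Coefficients expressing `(M, N)` in the `W8` basis. -/
noncomputable def coeff8 (M N : Matrix (Fin 3) (Fin 3) ℝ) : Fin 8 → ℝ :=
  ![ (1/6) * M 0 0 + (1/3) * M 1 1 + (1/4) * M 0 1 + (-1/12) * M 0 2 + (-7/12) * M 1 2
      + (1/6) * N 0 1 + (1/6) * N 0 2 + (2/3) * N 1 2,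
     (5/6) * M 0 0 + (5/3) * M 1 1 + (1/4) * M 0 1 + (-11/12) * M 0 2 + (25/12) * M 1 2
      + (-1/6) * N 0 1 + (5/6) * N 0 2 + (-5/3) * N 1 2,
     (1/6) * M 0 0 + (1/3) * M 1 1 + (-1/4) * M 0 1 + (11/12) * M 0 2 + (5/12) * M 1 2
      + (1/6) * N 0 1 + (-5/6) * N 0 2 + (-1/3) * N 1 2,
     (-3/2) * M 0 0 + (-3/2) * M 1 1 + (3/2) * M 0 2 + (-3/2) * M 1 2
      + (-3/2) * N 0 2 + (3/2) * N 1 2,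
     (3/2) * M 0 0 + (3/2) * M 1 1 + (3/4) * M 0 1 + (-9/4) * M 0 2 + (9/4) * M 1 2
      + (3/2) * N 0 2 + (-3/2) * N 1 2,
     (1) * M 0 0 + (1/2) * M 1 1 + (-1/2) * M 0 2 + (1) * M 1 2
      + (-1/2) * N 0 1 + (1) * N 0 2 + (-1/2) * N 1 2,
     (-1) * M 0 0 + (-1/2) * M 1 1 + (-3/4) * M 0 1 + (5/4) * M 0 2 + (-1/4) * M 1 2
      + (1/2) * N 0 1 + (-1) * N 0 2 + (1/2) * N 1 2,
     (-1/2) * M 0 0 + (-1) * M 1 1 + (-3/4) * M 0 1 + (1/4) * M 0 2 + (-5/4) * M 1 2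
      + (-1/2) * N 0 1 + (-1/2) * N 0 2 + (1) * N 1 2 ]

lemma coeff8_0 (M N : Matrix (Fin 3) (Fin 3) ℝ) : coeff8 M N 0 =
    (1/6) * M 0 0 + (1/3) * M 1 1 + (1/4) * M 0 1 + (-1/12) * M 0 2 + (-7/12) * M 1 2
      + (1/6) * N 0 1 + (1/6) * N 0 2 + (2/3) * N 1 2 := rfl
lemma coeff8_1 (M N : Matrix (Fin 3) (Fin 3) ℝ) : coeff8 M N 1 =
    (5/6) * M 0 0 + (5/3) * M 1 1 + (1/4) * M 0 1 + (-11/12) * M 0 2 + (25/12) * M 1 2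
      + (-1/6) * N 0 1 + (5/6) * N 0 2 + (-5/3) * N 1 2 := rfl
lemma coeff8_2 (M N : Matrix (Fin 3) (Fin 3) ℝ) : coeff8 M N 2 =
    (1/6) * M 0 0 + (1/3) * M 1 1 + (-1/4) * M 0 1 + (11/12) * M 0 2 + (5/12) * M 1 2
      + (1/6) * N 0 1 + (-5/6) * N 0 2 + (-1/3) * N 1 2 := rfl
lemma coeff8_3 (M N : Matrix (Fin 3) (Fin 3) ℝ) : coeff8 M N 3 =
    (-3/2) * M 0 0 + (-3/2) * M 1 1 + (3/2) * M 0 2 + (-3/2) * M 1 2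
      + (-3/2) * N 0 2 + (3/2) * N 1 2 := rfl
lemma coeff8_4 (M N : Matrix (Fin 3) (Fin 3) ℝ) : coeff8 M N 4 =
    (3/2) * M 0 0 + (3/2) * M 1 1 + (3/4) * M 0 1 + (-9/4) * M 0 2 + (9/4) * M 1 2
      + (3/2) * N 0 2 + (-3/2) * N 1 2 := rfl
lemma coeff8_5 (M N : Matrix (Fin 3) (Fin 3) ℝ) : coeff8 M N 5 =
    (1) * M 0 0 + (1/2) * M 1 1 + (-1/2) * M 0 2 + (1) * M 1 2
      + (-1/2) * N 0 1 + (1) * N 0 2 + (-1/2) * N 1 2 := rfl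
lemma coeff8_6 (M N : Matrix (Fin 3) (Fin 3) ℝ) : coeff8 M N 6 =
    (-1) * M 0 0 + (-1/2) * M 1 1 + (-3/4) * M 0 1 + (5/4) * M 0 2 + (-1/4) * M 1 2
      + (1/2) * N 0 1 + (-1) * N 0 2 + (1/2) * N 1 2 := rfl
lemma coeff8_7 (M N : Matrix (Fin 3) (Fin 3) ℝ) : coeff8 M N 7 =
    (-1/2) * M 0 0 + (-1) * M 1 1 + (-3/4) * M 0 1 + (1/4) * M 0 2 + (-5/4) * M 1 2
      + (-1/2) * N 0 1 + (-1/2) * N 0 2 + (1) * N 1 2 := rfl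

lemma fin3_mk0 {h : (0:ℕ) < 3} : (⟨0, h⟩ : Fin 3) = 0 := rfl
lemma fin3_mk1 {h : (1:ℕ) < 3} : (⟨1, h⟩ : Fin 3) = 1 := rfl
lemma fin3_mk2 {h : (2:ℕ) < 3} : (⟨2, h⟩ : Fin 3) = 2 := rfl

end aux

set_option maxHeartbeats 2000000 in
/-- (a) Each of the eight explicit triples `(ηⁱ, η₁ⁱ, η₂ⁱ)` is an orthonormal frame of
`ℝ³`; (b) the pairs `W₁, …, W₈` are linearly independent and form a basis of the
8-dimensional space `V = Sym₀³ × Skew³`: each `Wᵢ` lies in `V`, and every element of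
`V` lies in their span. -/
theorem W8_frames_and_basis :
    (∀ i, IsONFrame (eta8 i) (eta8₁ i) (eta8₂ i)) ∧
    LinearIndependent ℝ W8 ∧
    (∀ i, (W8 i).1.IsSymm ∧ (W8 i).1.trace = 0 ∧ (W8 i).2.transpose = -(W8 i).2) ∧
    (∀ M N : Matrix (Fin 3) (Fin 3) ℝ, M.IsSymm → M.trace = 0 → N.transpose = -N →
      (M, N) ∈ Submodule.span ℝ (Set.range W8)) := by
  have hframe : ∀ i, IsONFrame (eta8 i) (eta8₁ i) (eta8₂ i) := by
    intro i
    fin_cases i <;>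
      norm_num [IsONFrame, dot3, Fin.sum_univ_three, Fin.reduceFinMk, eta8, eta8₁, eta8₂,
        Matrix.cons_val_two, Matrix.tail_cons, Matrix.head_cons]
  refine ⟨hframe, ?_, ?_, ?_⟩
  · -- linear independence
    rw [Fintype.linearIndependent_iff]
    intro g hg
    have key : ∀ a b : Fin 3,
        (∑ i, g i * (W8 i).1 a b = 0) ∧ (∑ i, g i * (W8 i).2 a b = 0) := by
      intro a b
      constructor
      · have h := congrFun (congrFun (congrArg Prod.fst hg) a) b
        simpa [Prod.fst_sum, Matrix.sum_apply, Matrix.smul_apply, smul_eq_mul] using h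
      · have h := congrFun (congrFun (congrArg Prod.snd hg) a) b
        simpa [Prod.snd_sum, Matrix.sum_apply, Matrix.smul_apply, smul_eq_mul] using h
    have q1 := (key 0 0).1
    have q2 := (key 1 1).1
    have q3 := (key 0 1).1
    have q4 := (key 0 2).1
    have q5 := (key 1 2).1
    have q6 := (key 0 1).2
    have q7 := (key 0 2).2
    have q8 := (key 1 2).2
    simp only [Fin.sum_univ_eight, W8, Matrix.sub_apply, Matrix.vecMulVec_apply,
      E1_0, E1_1, E1_2, E1_3, E1_4, E1_5, E1_6, E1_7,
      E2_0, E2_1, E2_2, E2_3, E2_4, E2_5, E2_6, E2_7] at q1 q2 q3 q4 q5 q6 q7 q8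
    norm_num [Matrix.cons_val_two, Matrix.tail_cons, Matrix.head_cons] at q1 q2 q3 q4 q5 q6 q7 q8
    have h0 : g 0 = 0 := by linarith
    have h1 : g 1 = 0 := by linarith
    have h2 : g 2 = 0 := by linarith
    have h3 : g 3 = 0 := by linarith
    have h4 : g 4 = 0 := by linarith
    have h5 : g 5 = 0 := by linarith
    have h6 : g 6 = 0 := by linarith
    have h7 : g 7 = 0 := by linarith
    intro i
    fin_cases i
    exacts [h0, h1, h2, h3, h4, h5, h6, h7]
  · -- each Wᵢ lies in V
    intro i
    obtain ⟨h0, h1, h2, -, -, -⟩ := hframe i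
    refine ⟨?_, ?_, ?_⟩
    · show _ = _
      ext a b
      simp [W8, Matrix.transpose_apply, Matrix.sub_apply, Matrix.vecMulVec_apply]
      ring
    · simp only [W8, Matrix.trace, Matrix.diag, Matrix.sub_apply, Matrix.vecMulVec_apply,
        Fin.sum_univ_three]
      simp only [dot3, Fin.sum_univ_three] at h1 h2
      linarith
    · ext a b
      simp [W8, Matrix.transpose_apply, Matrix.sub_apply, Matrix.vecMulVec_apply,
        Matrix.neg_apply]
      ring
  · -- span
    intro M N hM htrM hN
    rw [Submodule.mem_span_range_iff_exists_fun]
    refine ⟨coeff8 M N, ?_⟩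
    have s10 : M 1 0 = M 0 1 := (by simpa using congrFun (congrFun hM 1) 0 : M 0 1 = M 1 0).symm
    have s20 : M 2 0 = M 0 2 := (by simpa using congrFun (congrFun hM 2) 0 : M 0 2 = M 2 0).symm
    have s21 : M 2 1 = M 1 2 := (by simpa using congrFun (congrFun hM 2) 1 : M 1 2 = M 2 1).symm
    have t22 : M 2 2 = -M 0 0 - M 1 1 := by
      simp only [Matrix.trace, Matrix.diag, Fin.sum_univ_three] at htrM
      linarith
    have n' : ∀ a b : Fin 3, N b a = -N a b := by
      intro a b
      have := congrFun (congrFun hN a) b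
      simpa [Matrix.transpose_apply, Matrix.neg_apply] using this
    have n00 : N 0 0 = 0 := by have := n' 0 0; linarith
    have n11 : N 1 1 = 0 := by have := n' 1 1; linarith
    have n22 : N 2 2 = 0 := by have := n' 2 2; linarith
    have n10 : N 1 0 = -N 0 1 := n' 0 1
    have n20 : N 2 0 = -N 0 2 := n' 0 2
    have n21 : N 2 1 = -N 1 2 := n' 1 2
    refine Prod.ext ?_ ?_
    · rw [Prod.fst_sum]
      ext a b
      rw [Matrix.sum_apply]
      simp only [Prod.smul_fst, Prod.smul_snd, Matrix.smul_apply, smul_eq_mul, Fin.sum_univ_eight, W8,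
        Matrix.sub_apply, Matrix.vecMulVec_apply,
        E1_0, E1_1, E1_2, E1_3, E1_4, E1_5, E1_6, E1_7,
        E2_0, E2_1, E2_2, E2_3, E2_4, E2_5, E2_6, E2_7,
        coeff8_0, coeff8_1, coeff8_2, coeff8_3, coeff8_4, coeff8_5, coeff8_6, coeff8_7]
      fin_cases a <;> fin_cases b <;> norm_num [fin3_mk0, fin3_mk1, fin3_mk2, Matrix.cons_val_two, Matrix.tail_cons, Matrix.head_cons] <;> linarith
    · rw [Prod.snd_sum]
      ext a b
      rw [Matrix.sum_apply]
      simp only [Prod.smul_fst, Prod.smul_snd, Matrix.smul_apply, smul_eq_mul, Fin.sum_univ_eight, W8,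
        Matrix.sub_apply, Matrix.vecMulVec_apply,
        E1_0, E1_1, E1_2, E1_3, E1_4, E1_5, E1_6, E1_7,
        E2_0, E2_1, E2_2, E2_3, E2_4, E2_5, E2_6, E2_7,
        coeff8_0, coeff8_1, coeff8_2, coeff8_3, coeff8_4, coeff8_5, coeff8_6, coeff8_7]
      fin_cases a <;> fin_cases b <;> norm_num [fin3_mk0, fin3_mk1, fin3_mk2, Matrix.cons_val_two, Matrix.tail_cons, Matrix.head_cons] <;> linarith
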